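/- Define the vacuum-diagram integrals V(n,a,b) := ∫₀^∞ x^{2n+1} K₀(x)^a (x·K₀'(x))^b dx for integers n ≥ 0, a, b ≥ 0 with a + b > 0. Then 2(n+1)·V(n,a,b) + a·V(n,a-1,b+1) + b·V(n+1,a+1,b-1) = 0. -/

import Mathlib

open MeasureTheory

noncomputable def K₀ (t : ℝ) : ℝ := ∫ x in Set.Ioi (0:ℝ), Real.exp (-t * Real.cosh x)

/-- Broadhurst's vacuum-diagram integrals. -/
noncomputable def V (n a b : ℕ) : ℝ :=
  ∫ x in Set.Ioi (0:ℝ), x ^ (2 * n + 1) * (K₀ x) ^ a * (x * deriv K₀ x) ^ b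

open Real Set Filter



noncomputable def Kf (k : ℕ) (t : ℝ) : ℝ :=
  ∫ u in Set.Ioi (0:ℝ), Real.cosh u ^ k * Real.exp (-t * Real.cosh u)

lemma K0_eq : K₀ = Kf 0 := by
  funext t; simp [K₀, Kf]

lemma cosh_le_exp_self {u : ℝ} (hu : 0 ≤ u) : Real.cosh u ≤ Real.exp u := by
  rw [Real.cosh_eq]
  have h1 : Real.exp (-u) ≤ Real.exp u := Real.exp_le_exp.2 (by linarith)
  linarith

lemma exp_le_two_cosh (u : ℝ) : Real.exp u ≤ 2 * Real.cosh u := by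
  rw [Real.cosh_eq]
  linarith [Real.exp_pos (-u)]

lemma sq_le_cosh {u : ℝ} (hu : 0 ≤ u) : u^2/8 ≤ Real.cosh u := by
  have h1 : u/2 + 1 ≤ Real.exp (u/2) := Real.add_one_le_exp (u/2)
  have h2 : Real.exp (u/2) * Real.exp (u/2) = Real.exp u := by
    rw [← Real.exp_add]; ring_nf
  have h3 := exp_le_two_cosh u
  nlinarith

lemma kernel_le (k : ℕ) {t u : ℝ} (ht : 0 < t) (hu : 0 < u) :
    Real.cosh u ^ k * Real.exp (-t * Real.cosh u)
      ≤ Real.exp (2*(k+1)^2/t) * Real.exp (-u) := by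
  have hc0 : (0:ℝ) ≤ Real.cosh u := (Real.cosh_pos u).le
  have h1 : Real.cosh u ^ k ≤ Real.exp (k * u) := by
    calc Real.cosh u ^ k ≤ Real.exp u ^ k := pow_le_pow_left₀ hc0 (cosh_le_exp_self hu.le) k
    _ = Real.exp (k * u) := by rw [← Real.exp_nat_mul]
  have h2 : u^2/8 ≤ Real.cosh u := sq_le_cosh hu.le
  have h6 : ((k:ℝ)+1)*u - t*(u^2/8) ≤ 2*((k:ℝ)+1)^2/t := by
    rw [le_div_iff₀ ht]; nlinarith [sq_nonneg (t*u - 4*((k:ℝ)+1))]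
  have key : (k:ℝ) * u + (-t * Real.cosh u) ≤ 2*((k:ℝ)+1)^2/t + (-u) := by nlinarith
  calc Real.cosh u ^ k * Real.exp (-t * Real.cosh u)
      ≤ Real.exp (k*u) * Real.exp (-t * Real.cosh u) :=
        mul_le_mul_of_nonneg_right h1 (Real.exp_nonneg _)
    _ = Real.exp ((k:ℝ)*u + (-t * Real.cosh u)) := (Real.exp_add _ _).symm
    _ ≤ _ := by rw [← Real.exp_add]; exact Real.exp_le_exp.2 key

lemma kernel_cont (k : ℕ) (t : ℝ) :
    Continuous (fun u => Real.cosh u ^ k * Real.exp (-t * Real.cosh u)) := by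
  fun_prop

lemma kernel_integrable (k : ℕ) {t : ℝ} (ht : 0 < t) :
    IntegrableOn (fun u => Real.cosh u ^ k * Real.exp (-t * Real.cosh u)) (Set.Ioi 0) := by
  apply Integrable.mono' ((exp_neg_integrableOn_Ioi 0 one_pos).const_mul
    (Real.exp (2*(k+1)^2/t)))
  · exact (kernel_cont k t).aestronglyMeasurable.restrict
  · filter_upwards [ae_restrict_mem measurableSet_Ioi] with u hu
    rw [Real.norm_eq_abs, abs_of_nonneg (by positivity)]
    simpa using kernel_le k ht hu



lemma Kf_nonneg (k : ℕ) (t : ℝ) : 0 ≤ Kf k t := by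
  apply integral_nonneg
  intro u
  positivity

lemma hasDerivAt_Kf (k : ℕ) {t : ℝ} (ht : 0 < t) :
    HasDerivAt (Kf k) (-(Kf (k+1) t)) t := by
  have main := hasDerivAt_integral_of_dominated_loc_of_deriv_le (F := fun t u =>
      Real.cosh u ^ k * Real.exp (-t * Real.cosh u))
    (F' := fun t u => -(Real.cosh u ^ (k+1) * Real.exp (-t * Real.cosh u)))
    (x₀ := t) (s := Metric.ball t (t/2))
    (bound := fun u => Real.cosh u ^ (k+1) * Real.exp (-(t/2) * Real.cosh u))
    (μ := volume.restrict (Set.Ioi 0)) (Metric.ball_mem_nhds t (by positivity))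
    (Eventually.of_forall fun s => (kernel_cont k s).aestronglyMeasurable.restrict)
    (kernel_integrable k ht)
    ((kernel_cont (k+1) t).neg.aestronglyMeasurable.restrict)
    ?_ (kernel_integrable (k+1) (by positivity)) ?_
  · rw [integral_neg] at main
    exact main.2
  · filter_upwards [ae_restrict_mem measurableSet_Ioi] with u hu
    intro s hs
    have hs2 : t/2 ≤ s := by
      have := abs_lt.1 (mem_ball_iff_norm.1 hs); linarith [this.1]
    rw [norm_neg, Real.norm_eq_abs, abs_of_nonneg (by positivity)]
    apply mul_le_mul_of_nonneg_left _ (by positivity)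
    apply Real.exp_le_exp.2
    have := (Real.cosh_pos u).le
    nlinarith [Real.cosh_pos u]
  · filter_upwards [ae_restrict_mem measurableSet_Ioi] with u hu
    intro s hs
    have h : HasDerivAt (fun s : ℝ => Real.exp (-s * Real.cosh u))
        (-Real.cosh u * Real.exp (-s * Real.cosh u)) s := by
      have h1 : HasDerivAt (fun s : ℝ => -s * Real.cosh u) (-Real.cosh u) s := by
        simpa using (hasDerivAt_id s).neg.mul_const (Real.cosh u)
      have := h1.exp
      convert this using 1 <;> ring_nf
    have := h.const_mul (Real.cosh u ^ k)
    refine this.congr_deriv ?_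
    rw [pow_succ]; ring

lemma Kf_continuousAt (k : ℕ) {t : ℝ} (ht : 0 < t) : ContinuousAt (Kf k) t :=
  (hasDerivAt_Kf k ht).continuousAt



lemma bessel_ode {x : ℝ} (hx : 0 < x) : x * Kf 2 x = Kf 1 x + x * Kf 0 x := by
  -- FTC on h u = sinh u * exp (-x * cosh u)
  set f' : ℝ → ℝ := fun u =>
    Real.cosh u * Real.exp (-x * Real.cosh u)
      - x * ((Real.cosh u ^ 2 - 1) * Real.exp (-x * Real.cosh u)) with hf'
  have hderiv : ∀ u ∈ Set.Ioi (0:ℝ), HasDerivAt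
      (fun u => Real.sinh u * Real.exp (-x * Real.cosh u)) (f' u) u := by
    intro u _
    have h1 : HasDerivAt (fun u : ℝ => Real.exp (-x * Real.cosh u))
        (-x * Real.sinh u * Real.exp (-x * Real.cosh u)) u := by
      have h0 : HasDerivAt (fun u : ℝ => -x * Real.cosh u) (-x * Real.sinh u) u :=
        (Real.hasDerivAt_cosh u).const_mul (-x)
      simpa [mul_comm] using h0.exp
    have := ((Real.hasDerivAt_sinh u).mul h1 :
      HasDerivAt (fun u => Real.sinh u * Real.exp (-x * Real.cosh u)) _ u)
    refine this.congr_deriv ?_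
    have hs : Real.cosh u ^ 2 - 1 = Real.sinh u ^ 2 := by
      have := Real.cosh_sq_sub_sinh_sq u; linarith
    rw [hf']
    simp only [hs]
    ring
  have hint : IntegrableOn f' (Set.Ioi 0) := by
    apply Integrable.sub
    · simpa [IntegrableOn] using kernel_integrable 1 hx
    · apply Integrable.const_mul
      have : (fun u => (Real.cosh u ^ 2 - 1) * Real.exp (-x * Real.cosh u))
          = (fun u => Real.cosh u ^ 2 * Real.exp (-x * Real.cosh u)
              - Real.cosh u ^ 0 * Real.exp (-x * Real.cosh u)) := by
        funext u; ring
      rw [this]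
      exact (kernel_integrable 2 hx).sub (kernel_integrable 0 hx)
  have htends : Tendsto (fun u => Real.sinh u * Real.exp (-x * Real.cosh u)) atTop (nhds 0) := by
    have hbnd : ∀ᶠ u in atTop, ‖Real.sinh u * Real.exp (-x * Real.cosh u)‖
        ≤ Real.exp (2*(1+1)^2/x) * Real.exp (-u) := by
      filter_upwards [eventually_gt_atTop (0:ℝ)] with u hu
      rw [Real.norm_eq_abs, abs_mul, abs_of_nonneg (Real.exp_nonneg _),
        abs_of_nonneg (Real.sinh_nonneg_iff.2 hu.le)]
      calc Real.sinh u * Real.exp (-x * Real.cosh u)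
          ≤ Real.cosh u ^ 1 * Real.exp (-x * Real.cosh u) := by
            apply mul_le_mul_of_nonneg_right _ (Real.exp_nonneg _)
            simpa using (Real.sinh_lt_cosh u).le
        _ ≤ _ := by simpa using kernel_le 1 hx hu
    apply squeeze_zero_norm' hbnd
    rw [show (0:ℝ) = Real.exp (2*(1+1)^2/x) * 0 by ring]
    exact (Real.tendsto_exp_neg_atTop_nhds_zero).const_mul _
  have hcont : ContinuousWithinAt (fun u => Real.sinh u * Real.exp (-x * Real.cosh u))
      (Set.Ici 0) 0 :=
    (Real.continuous_sinh.mul (Real.continuous_exp.comp ((continuous_const).mul Real.continuous_cosh))).continuousWithinAt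
  have := integral_Ioi_of_hasDerivAt_of_tendsto hcont hderiv hint htends
  simp only [Real.sinh_zero, zero_mul, sub_zero] at this
  rw [hf'] at this
  rw [integral_sub (by simpa [IntegrableOn] using kernel_integrable 1 hx) (by
    apply Integrable.const_mul
    have h2 : (fun u => (Real.cosh u ^ 2 - 1) * Real.exp (-x * Real.cosh u))
        = (fun u => Real.cosh u ^ 2 * Real.exp (-x * Real.cosh u)
            - Real.cosh u ^ 0 * Real.exp (-x * Real.cosh u)) := by
      funext u; ring
    rw [h2]
    exact (kernel_integrable 2 hx).sub (kernel_integrable 0 hx))] at this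
  rw [integral_const_mul] at this
  have h2 : ∫ u in Set.Ioi (0:ℝ), (Real.cosh u ^ 2 - 1) * Real.exp (-x * Real.cosh u)
      = Kf 2 x - Kf 0 x := by
    rw [show (fun u => (Real.cosh u ^ 2 - 1) * Real.exp (-x * Real.cosh u))
        = (fun u => Real.cosh u ^ 2 * Real.exp (-x * Real.cosh u)
            - Real.cosh u ^ 0 * Real.exp (-x * Real.cosh u)) from funext fun u => by ring]
    rw [integral_sub (kernel_integrable 2 hx) (kernel_integrable 0 hx)]
    simp [Kf]
  rw [h2] at this
  have h3 : ∫ u in Set.Ioi (0:ℝ), Real.cosh u * Real.exp (-x * Real.cosh u) = Kf 1 x := by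
    simp [Kf]
  rw [h3] at this
  linarith



lemma Kf0_le {x : ℝ} (hx : 0 < x) (hx1 : x ≤ 1) : Kf 0 x ≤ 1 + Real.log 2 - Real.log x := by
  set T : ℝ := Real.log 2 - Real.log x with hT
  have hT0 : 0 < T := by
    have h1 : Real.log x ≤ 0 := Real.log_nonpos hx.le hx1
    have h2 : 0 < Real.log 2 := Real.log_pos (by norm_num)
    linarith
  have hsplit : Set.Ioi (0:ℝ) = Set.Ioc 0 T ∪ Set.Ioi T := (Set.Ioc_union_Ioi_eq_Ioi hT0.le).symm
  have hint := kernel_integrable 0 hx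
  have hint1 : IntegrableOn (fun u => Real.cosh u ^ 0 * Real.exp (-x * Real.cosh u)) (Set.Ioc 0 T) :=
    hint.mono_set Set.Ioc_subset_Ioi_self
  have hint2 : IntegrableOn (fun u => Real.cosh u ^ 0 * Real.exp (-x * Real.cosh u)) (Set.Ioi T) :=
    hint.mono_set (Set.Ioi_subset_Ioi hT0.le)
  have hsum : Kf 0 x = (∫ u in Set.Ioc 0 T, Real.exp (-x * Real.cosh u))
      + ∫ u in Set.Ioi T, Real.exp (-x * Real.cosh u) := by
    rw [Kf, hsplit]
    rw [setIntegral_union (Set.Ioc_disjoint_Ioi le_rfl) measurableSet_Ioi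
      (by simpa using hint1) (by simpa using hint2)]
    simp
  have h1 : (∫ u in Set.Ioc 0 T, Real.exp (-x * Real.cosh u)) ≤ T := by
    have : (∫ u in Set.Ioc 0 T, Real.exp (-x * Real.cosh u)) ≤ ∫ _u in Set.Ioc 0 T, (1:ℝ) := by
      apply setIntegral_mono_on (by simpa using hint1) (integrableOn_const measure_Ioc_lt_top.ne)
        measurableSet_Ioc
      intro u hu
      rw [Real.exp_le_one_iff]
      have := Real.cosh_pos u
      nlinarith
    simpa [hT0.le] using this
  have h2 : (∫ u in Set.Ioi T, Real.exp (-x * Real.cosh u)) ≤ 1 := by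
    have hptwise : ∀ u ∈ Set.Ioi T, Real.exp (-x * Real.cosh u) ≤ Real.exp (T - 1) * Real.exp (-u) := by
      intro u hu
      rw [← Real.exp_add]
      apply Real.exp_le_exp.2
      -- x * cosh u ≥ x * e^u / 2 = e^(u - T) ≥ 1 + (u - T)
      have e1 : Real.exp u ≤ 2 * Real.cosh u := exp_le_two_cosh u
      have e2 : Real.exp (u - T) = x / 2 * Real.exp u := by
        rw [Real.exp_sub, hT, Real.exp_sub, Real.exp_log hx, Real.exp_log (by norm_num : (0:ℝ) < 2)]
        field_simp
      have e3 : 1 + (u - T) ≤ Real.exp (u - T) := by linarith [Real.add_one_le_exp (u - T)]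
      have e4 : x / 2 * Real.exp u ≤ x * Real.cosh u := by nlinarith
      nlinarith [e2 ▸ e3]
    calc (∫ u in Set.Ioi T, Real.exp (-x * Real.cosh u))
        ≤ ∫ u in Set.Ioi T, Real.exp (T - 1) * Real.exp (-u) := by
          apply setIntegral_mono_on (by simpa using hint2)
            (by simpa [IntegrableOn] using ((exp_neg_integrableOn_Ioi T one_pos).const_mul (Real.exp (T-1))))
            measurableSet_Ioi hptwise
      _ = Real.exp (T - 1) * Real.exp (-T) := by
          rw [integral_const_mul, integral_exp_neg_Ioi]
      _ = Real.exp (-1) := by rw [← Real.exp_add]; ring_nf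
      _ ≤ 1 := Real.exp_le_one_iff.2 (by norm_num)
  rw [hsum]; linarith



lemma xKf1_le {x : ℝ} (hx : 0 < x) : x * Kf 1 x ≤ 2 * Kf 0 (x/2) := by
  rw [Kf, Kf, ← integral_const_mul, ← integral_const_mul]
  apply setIntegral_mono_on
  · exact (kernel_integrable 1 hx).const_mul x
  · exact (kernel_integrable 0 (by positivity)).const_mul 2
  · exact measurableSet_Ioi
  · intro u _
    simp only [pow_one, pow_zero, one_mul]
    -- x * (cosh u * exp (-x cosh u)) ≤ 2 * exp (-(x/2) cosh u)
    set s : ℝ := x * Real.cosh u with hs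
    have hs0 : 0 < s := mul_pos hx (Real.cosh_pos u)
    have h1 : s / 2 ≤ Real.exp (s/2) := by linarith [Real.add_one_le_exp (s/2), Real.exp_pos (s/2)]
    have h2 : Real.exp (-x * Real.cosh u) = Real.exp (-(s/2)) * Real.exp (-(s/2)) := by
      rw [← Real.exp_add]; congr 1; rw [hs]; ring
    have h3 : -(x/2) * Real.cosh u = -(s/2) := by rw [hs]; ring
    rw [h3]
    calc x * (Real.cosh u * Real.exp (-x * Real.cosh u))
        = s * Real.exp (-x * Real.cosh u) := by rw [hs]; ring
      _ = s * Real.exp (-(s/2)) * Real.exp (-(s/2)) := by rw [h2]; ring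
      _ ≤ 2 * Real.exp (-(s/2)) := by
          apply mul_le_mul_of_nonneg_right _ (Real.exp_nonneg _)
          have h4 : Real.exp (-(s/2)) = (Real.exp (s/2))⁻¹ := by
            rw [← Real.exp_neg]
          rw [h4]
          rw [mul_inv_le_iff₀ (Real.exp_pos _)]
          linarith
-- the log-type bound
noncomputable def b₀ (x : ℝ) : ℝ := 2 + 2 * Real.log 2 - Real.log x

lemma b0_pos {x : ℝ} (hx : 0 < x) (hx1 : x ≤ 1) : 1 ≤ b₀ x := by
  unfold b₀
  have h1 : Real.log x ≤ 0 := Real.log_nonpos hx.le hx1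
  have h2 : 0 < Real.log 2 := Real.log_pos (by norm_num)
  linarith

lemma Kf0_le_b0 {x : ℝ} (hx : 0 < x) (hx1 : x ≤ 1) : Kf 0 x ≤ b₀ x := by
  have := Kf0_le hx hx1
  unfold b₀
  have h2 : 0 < Real.log 2 := Real.log_pos (by norm_num)
  linarith

lemma xKf1_le_b0 {x : ℝ} (hx : 0 < x) (hx1 : x ≤ 1) : x * Kf 1 x ≤ 2 * b₀ x := by
  have h1 := xKf1_le hx
  have h2 := Kf0_le (by positivity : (0:ℝ) < x/2) (by linarith)
  have h3 : Real.log (x/2) = Real.log x - Real.log 2 :=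
    Real.log_div hx.ne' (by norm_num)
  unfold b₀
  nlinarith [Kf_nonneg 0 (x/2)]

-- key boundedness: x * b₀(x)^m ≤ C on (0,1]
lemma x_mul_b0_pow_le (m : ℕ) {x : ℝ} (hx : 0 < x) (hx1 : x ≤ 1) :
    x * b₀ x ^ m ≤ (2 + 2 * Real.log 2 + 2 * m) ^ m := by
  rcases Nat.eq_zero_or_pos m with rfl | hm
  · simpa using hx1
  have hm0 : (0:ℝ) < m := by exact_mod_cast hm
  set ε : ℝ := 1 / (2 * m) with hε
  have hε0 : 0 < ε := by positivity
  -- -log x ≤ (1/ε) * x ^ (-ε)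
  have hlog : -Real.log x ≤ (1/ε) * x ^ (-ε) := by
    have h1 : Real.log (x ^ (-ε)) ≤ x ^ (-ε) := by
      have := Real.log_le_sub_one_of_pos (Real.rpow_pos_of_pos hx (-ε))
      linarith
    rw [Real.log_rpow hx] at h1
    calc -Real.log x = (1/ε) * (-ε * Real.log x) := by field_simp
      _ ≤ (1/ε) * x ^ (-ε) := by
          have hlx : Real.log x * ε = ε * Real.log x := mul_comm _ _
          apply mul_le_mul_of_nonneg_left h1 (by positivity)
  have hxε1 : 1 ≤ x ^ (-ε) :=
    Real.one_le_rpow_of_pos_of_le_one_of_nonpos hx hx1 (by linarith)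
  have hb : b₀ x ≤ (2 + 2 * Real.log 2 + 2 * m) * x ^ (-ε) := by
    unfold b₀
    have h2 : (0:ℝ) < Real.log 2 := Real.log_pos (by norm_num)
    have h3 : (1:ℝ)/ε = 2 * m := by rw [hε]; field_simp
    nlinarith [hlog, hxε1]
  have hb0 : (0:ℝ) ≤ b₀ x := by
    have h1 : Real.log x ≤ 0 := Real.log_nonpos hx.le hx1
    have h2 : 0 < Real.log 2 := Real.log_pos (by norm_num)
    unfold b₀; linarith
  have hpow : b₀ x ^ m ≤ (2 + 2 * Real.log 2 + 2 * m) ^ m * x ^ (-(1/2) : ℝ) := by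
    calc b₀ x ^ m ≤ ((2 + 2 * Real.log 2 + 2 * m) * x ^ (-ε)) ^ m :=
          pow_le_pow_left₀ hb0 hb m
      _ = (2 + 2 * Real.log 2 + 2 * m) ^ m * (x ^ (-ε)) ^ m := mul_pow _ _ _
      _ = (2 + 2 * Real.log 2 + 2 * m) ^ m * x ^ (-(1/2) : ℝ) := by
          congr 1
          rw [← Real.rpow_natCast (x ^ (-ε)) m, ← Real.rpow_mul hx.le]
          congr 1
          rw [hε]; field_simp
  have hfin : x * x ^ (-(1/2) : ℝ) ≤ 1 := by
    have : x * x ^ (-(1/2) : ℝ) = x ^ ((1:ℝ) + -(1/2)) := by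
      rw [Real.rpow_add hx, Real.rpow_one]
    rw [this]
    exact Real.rpow_le_one hx.le hx1 (by norm_num)
  have hC : (0:ℝ) ≤ (2 + 2 * Real.log 2 + 2 * m) ^ m := by
    have h2 : (0:ℝ) < Real.log 2 := Real.log_pos (by norm_num)
    positivity
  calc x * b₀ x ^ m ≤ x * ((2 + 2 * Real.log 2 + 2 * m) ^ m * x ^ (-(1/2) : ℝ)) :=
        mul_le_mul_of_nonneg_left hpow hx.le
    _ = (2 + 2 * Real.log 2 + 2 * m) ^ m * (x * x ^ (-(1/2) : ℝ)) := by ring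
    _ ≤ (2 + 2 * Real.log 2 + 2 * m) ^ m * 1 := mul_le_mul_of_nonneg_left hfin hC
    _ = _ := mul_one _



lemma Kf_decay (k : ℕ) {x : ℝ} (hx : 1 ≤ x) : Kf k x ≤ Real.exp (1 - x) * Kf k 1 := by
  rw [Kf, Kf, ← integral_const_mul]
  apply setIntegral_mono_on (kernel_integrable k (by linarith))
    ((kernel_integrable k one_pos).const_mul _) measurableSet_Ioi
  intro u _
  rw [show Real.exp (1-x) * (Real.cosh u ^ k * Real.exp (-1 * Real.cosh u))
      = Real.cosh u ^ k * (Real.exp (1-x) * Real.exp (-1 * Real.cosh u)) by ring]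
  apply mul_le_mul_of_nonneg_left _ (by positivity)
  rw [← Real.exp_add]
  apply Real.exp_le_exp.2
  have h1 : 1 ≤ Real.cosh u := Real.one_le_cosh u
  nlinarith

lemma poly_exp_integrable (m : ℕ) : IntegrableOn (fun x : ℝ => x ^ m * Real.exp (1 - x)) (Set.Ioi 1) := by
  have h := integrableOn_rpow_mul_exp_neg_mul_rpow (s := (m:ℝ)) (p := 1) (b := 1)
    (lt_of_lt_of_le neg_one_lt_zero (Nat.cast_nonneg m)) one_pos one_pos
  have h2 : IntegrableOn (fun x : ℝ => x ^ m * Real.exp (-x)) (Set.Ioi 0) := by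
    apply h.congr_fun _ measurableSet_Ioi
    intro x hx
    simp [Real.rpow_one, Real.rpow_natCast]
  have h3 : IntegrableOn (fun x : ℝ => Real.exp 1 * (x ^ m * Real.exp (-x))) (Set.Ioi 1) :=
    (h2.mono_set (Set.Ioi_subset_Ioi zero_le_one)).const_mul (Real.exp 1)
  apply h3.congr_fun _ measurableSet_Ioi
  intro x _
  show Real.exp 1 * (x ^ m * Real.exp (-x)) = x ^ m * Real.exp (1 - x)
  rw [Real.exp_sub, div_eq_mul_inv, ← Real.exp_neg]
  ring

lemma deriv_K0 {x : ℝ} (hx : 0 < x) : deriv K₀ x = -(Kf 1 x) := by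
  rw [K0_eq]
  exact (hasDerivAt_Kf 0 hx).deriv

lemma contOn_K0 : ContinuousOn K₀ (Set.Ioi 0) := by
  rw [K0_eq]
  exact fun x hx => (Kf_continuousAt 0 hx).continuousWithinAt

lemma contOn_derivK0 : ContinuousOn (deriv K₀) (Set.Ioi 0) := by
  exact ContinuousOn.congr (fun x hx => (Kf_continuousAt 1 hx).neg.continuousWithinAt)
    (fun x hx => deriv_K0 hx)

lemma contOn_integrand (m a b : ℕ) :
    ContinuousOn (fun x : ℝ => x ^ m * (K₀ x) ^ a * (x * deriv K₀ x) ^ b) (Set.Ioi 0) := by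
  apply ContinuousOn.mul
  · exact ((continuousOn_id.pow m).mul (contOn_K0.pow a))
  · exact ((continuousOn_id.mul contOn_derivK0).pow b)

-- pointwise form on Ioi 0
lemma integrand_eq {x : ℝ} (hx : 0 < x) (m a b : ℕ) :
    x ^ m * (K₀ x) ^ a * (x * deriv K₀ x) ^ b
      = x ^ m * (Kf 0 x) ^ a * (-(x * Kf 1 x)) ^ b := by
  rw [deriv_K0 hx, K0_eq]
  ring

lemma abs_integrand {x : ℝ} (hx : 0 < x) (m a b : ℕ) :
    |x ^ m * (K₀ x) ^ a * (x * deriv K₀ x) ^ b|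
      = x ^ m * (Kf 0 x) ^ a * (x * Kf 1 x) ^ b := by
  rw [integrand_eq hx m a b, abs_mul, abs_mul, abs_pow, abs_pow, abs_pow]
  rw [abs_of_nonneg hx.le, abs_of_nonneg (Kf_nonneg 0 x), abs_neg,
    abs_of_nonneg (mul_nonneg hx.le (Kf_nonneg 1 x))]

lemma small_bound (a b : ℕ) {x : ℝ} (hx : 0 < x) (hx1 : x ≤ 1) :
    (Kf 0 x) ^ a * (x * Kf 1 x) ^ b ≤ 2 ^ b * b₀ x ^ (a + b) := by
  have hb0 : (0:ℝ) ≤ b₀ x := le_trans zero_le_one (b0_pos hx hx1)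
  calc (Kf 0 x) ^ a * (x * Kf 1 x) ^ b
      ≤ (b₀ x) ^ a * (2 * b₀ x) ^ b := by
        apply mul_le_mul (pow_le_pow_left₀ (Kf_nonneg 0 x) (Kf0_le_b0 hx hx1) a)
          (pow_le_pow_left₀ (mul_nonneg hx.le (Kf_nonneg 1 x)) (xKf1_le_b0 hx hx1) b)
          (pow_nonneg (mul_nonneg hx.le (Kf_nonneg 1 x)) b) (pow_nonneg hb0 a)
    _ = 2 ^ b * b₀ x ^ (a + b) := by rw [mul_pow, pow_add]; ring

lemma tail_bound (a b : ℕ) (h : 1 ≤ a + b) {x : ℝ} (hx : 1 ≤ x) :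
    (Kf 0 x) ^ a * (x * Kf 1 x) ^ b
      ≤ x ^ b * ((max (Kf 0 1) (Kf 1 1)) ^ (a + b) * Real.exp (1 - x)) := by
  set D : ℝ := max (Kf 0 1) (Kf 1 1) with hD
  have hD0 : 0 ≤ D := le_trans (Kf_nonneg 0 1) (le_max_left _ _)
  have hE : Real.exp (1 - x) ≤ 1 := Real.exp_le_one_iff.2 (by linarith)
  have h0 : Kf 0 x ≤ Real.exp (1-x) * D :=
    (Kf_decay 0 hx).trans (mul_le_mul_of_nonneg_left (le_max_left _ _) (Real.exp_nonneg _))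
  have h1 : x * Kf 1 x ≤ x * (Real.exp (1-x) * D) := by
    apply mul_le_mul_of_nonneg_left _ (by linarith)
    exact (Kf_decay 1 hx).trans (mul_le_mul_of_nonneg_left (le_max_right _ _) (Real.exp_nonneg _))
  calc (Kf 0 x) ^ a * (x * Kf 1 x) ^ b
      ≤ (Real.exp (1-x) * D) ^ a * (x * (Real.exp (1-x) * D)) ^ b := by
        apply mul_le_mul (pow_le_pow_left₀ (Kf_nonneg 0 x) h0 a)
          (pow_le_pow_left₀ (mul_nonneg (by linarith) (Kf_nonneg 1 x)) h1 b)
          (pow_nonneg (mul_nonneg (by linarith) (Kf_nonneg 1 x)) b)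
          (pow_nonneg (mul_nonneg (Real.exp_nonneg _) hD0) a)
    _ = x ^ b * (D ^ (a+b) * (Real.exp (1-x)) ^ (a+b)) := by
        rw [mul_pow, pow_add, pow_add]; ring
    _ ≤ x ^ b * (D ^ (a+b) * Real.exp (1-x)) := by
        apply mul_le_mul_of_nonneg_left _ (pow_nonneg (by linarith) b)
        apply mul_le_mul_of_nonneg_left _ (pow_nonneg hD0 _)
        calc (Real.exp (1-x)) ^ (a+b) ≤ (Real.exp (1-x)) ^ 1 :=
              pow_le_pow_of_le_one (Real.exp_nonneg _) hE h
          _ = Real.exp (1-x) := pow_one _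

lemma integrand_integrableOn (m a b : ℕ) (hm : 1 ≤ m) (h : 1 ≤ a + b) :
    IntegrableOn (fun x : ℝ => x ^ m * (K₀ x) ^ a * (x * deriv K₀ x) ^ b) (Set.Ioi 0) := by
  rw [← Set.Ioc_union_Ioi_eq_Ioi (zero_le_one : (0:ℝ) ≤ 1), integrableOn_union]
  constructor
  · apply Integrable.mono' (g := fun _ => (2:ℝ) ^ b * (2 + 2 * Real.log 2 + 2 * (a+b)) ^ (a+b))
      (integrableOn_const measure_Ioc_lt_top.ne)
    · exact ((contOn_integrand m a b).mono (fun x hx => hx.1)).aestronglyMeasurable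
        measurableSet_Ioc
    · filter_upwards [ae_restrict_mem measurableSet_Ioc] with x hx
      rw [Real.norm_eq_abs, abs_integrand hx.1 m a b]
      have hb0 : (0:ℝ) ≤ b₀ x := le_trans zero_le_one (b0_pos hx.1 hx.2)
      calc x ^ m * (Kf 0 x) ^ a * (x * Kf 1 x) ^ b
          ≤ x ^ m * (2 ^ b * b₀ x ^ (a+b)) := by
            rw [mul_assoc]
            exact mul_le_mul_of_nonneg_left (small_bound a b hx.1 hx.2)
              (pow_nonneg hx.1.le m)
        _ ≤ x * (2 ^ b * b₀ x ^ (a+b)) := by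
            apply mul_le_mul_of_nonneg_right _
              (mul_nonneg (by positivity) (pow_nonneg hb0 _))
            calc x ^ m ≤ x ^ 1 := pow_le_pow_of_le_one hx.1.le hx.2 hm
              _ = x := pow_one x
        _ = 2 ^ b * (x * b₀ x ^ (a+b)) := by ring
        _ ≤ 2 ^ b * (2 + 2 * Real.log 2 + 2 * (a+b)) ^ (a+b) := by
            apply mul_le_mul_of_nonneg_left _ (by positivity)
            exact_mod_cast x_mul_b0_pow_le (a+b) hx.1 hx.2
  · apply Integrable.mono'
      (g := fun x : ℝ => (max (Kf 0 1) (Kf 1 1)) ^ (a+b) * (x ^ (m+b) * Real.exp (1 - x)))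
      (((poly_exp_integrable (m+b)).const_mul _))
    · exact ((contOn_integrand m a b).mono (fun x (hx : x ∈ Set.Ioi (1:ℝ)) => Set.mem_Ioi.2 (lt_trans zero_lt_one hx))).aestronglyMeasurable
        measurableSet_Ioi
    · filter_upwards [ae_restrict_mem measurableSet_Ioi] with x hx
      have hx1 : (1:ℝ) < x := hx
      have hx0 : (0:ℝ) < x := lt_trans zero_lt_one hx1
      rw [Real.norm_eq_abs, abs_integrand hx0 m a b]
      calc x ^ m * (Kf 0 x) ^ a * (x * Kf 1 x) ^ b
          ≤ x ^ m * (x ^ b * ((max (Kf 0 1) (Kf 1 1)) ^ (a + b) * Real.exp (1 - x))) := by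
            rw [mul_assoc]
            exact mul_le_mul_of_nonneg_left (tail_bound a b h hx1.le) (pow_nonneg hx0.le m)
        _ = (max (Kf 0 1) (Kf 1 1)) ^ (a+b) * (x ^ (m+b) * Real.exp (1 - x)) := by
            rw [pow_add]; ring

noncomputable def Gb (n a b : ℕ) (x : ℝ) : ℝ :=
  x ^ (2*n+2) * (K₀ x) ^ a * (x * deriv K₀ x) ^ b

lemma Gb_deriv (n a b : ℕ) {x : ℝ} (hx : 0 < x) :
    HasDerivAt (Gb n a b)
      (2*((n:ℝ)+1) * (x ^ (2*n+1) * (K₀ x) ^ a * (x * deriv K₀ x) ^ b)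
        + a * (x ^ (2*n+1) * (K₀ x) ^ (a-1) * (x * deriv K₀ x) ^ (b+1))
        + b * (x ^ (2*(n+1)+1) * (K₀ x) ^ (a+1) * (x * deriv K₀ x) ^ (b-1))) x := by
  have hK : HasDerivAt K₀ (deriv K₀ x) x := by
    rw [deriv_K0 hx, K0_eq]; exact hasDerivAt_Kf 0 hx
  have hL : HasDerivAt (fun y => y * deriv K₀ y) (x * K₀ x) x := by
    have h1 := (hasDerivAt_id x).mul ((hasDerivAt_Kf 1 hx).neg)
    have hEq : (fun y => y * deriv K₀ y) =ᶠ[nhds x] (fun y => y * -(Kf 1 y)) := by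
      filter_upwards [Ioi_mem_nhds hx] with y hy
      rw [deriv_K0 hy]
    have h2 := h1.congr_of_eventuallyEq hEq
    refine h2.congr_deriv ?_
    rw [K0_eq]
    have hb := bessel_ode hx
    simp only [id_eq, neg_neg, one_mul, Pi.neg_apply, Nat.reduceAdd]
    linarith
  have hG := ((hasDerivAt_pow (2*n+2) x).mul (hK.pow a)).mul (hL.pow b)
  have e1 : 2*n+2-1 = 2*n+1 := by omega
  rw [e1] at hG
  refine hG.congr_deriv ?_
  simp only [Pi.mul_apply, Pi.pow_apply]
  push_cast
  ring

lemma Gb_zero (n a b : ℕ) : Gb n a b 0 = 0 := by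
  simp [Gb]

lemma Gb_cont0 (n a b : ℕ) : ContinuousWithinAt (Gb n a b) (Set.Ici 0) 0 := by
  rw [ContinuousWithinAt, Gb_zero]
  apply squeeze_zero_norm'
    (a := fun x => (2:ℝ) ^ b * (2 + 2 * Real.log 2 + 2 * (a+b)) ^ (a+b) * x)
  · have hmem : ∀ᶠ x in nhdsWithin 0 (Set.Ici 0), x ∈ Set.Ici (0:ℝ) :=
      eventually_mem_nhdsWithin
    have hlt : ∀ᶠ x : ℝ in nhdsWithin 0 (Set.Ici 0), |x| < 1 := by
      apply eventually_nhdsWithin_of_eventually_nhds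
      have : Continuous (fun x : ℝ => |x|) := continuous_abs
      have h0 : |(0:ℝ)| < 1 := by norm_num
      exact this.continuousAt.eventually_lt continuous_const.continuousAt (by simpa using h0)
    filter_upwards [hmem, hlt] with x hx hx1
    rcases eq_or_lt_of_le (Set.mem_Ici.1 hx) with h | h
    · rw [← h]
      simp [Gb_zero]
    · have hx1' : x ≤ 1 := by rw [abs_of_nonneg h.le] at hx1; exact hx1.le
      rw [Real.norm_eq_abs, Gb, abs_integrand h (2*n+2) a b]
      have hb0 : (0:ℝ) ≤ b₀ x := le_trans zero_le_one (b0_pos h hx1')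
      calc x ^ (2*n+2) * (Kf 0 x) ^ a * (x * Kf 1 x) ^ b
          ≤ x ^ (2*n+2) * (2 ^ b * b₀ x ^ (a+b)) := by
            rw [mul_assoc]
            exact mul_le_mul_of_nonneg_left (small_bound a b h hx1') (pow_nonneg h.le _)
        _ ≤ (x * x) * (2 ^ b * b₀ x ^ (a+b)) := by
            apply mul_le_mul_of_nonneg_right _ (mul_nonneg (by positivity) (pow_nonneg hb0 _))
            calc x ^ (2*n+2) = x ^ (2*n+1) * x := by rw [← pow_succ]
              _ ≤ x ^ 1 * x := by
                  apply mul_le_mul_of_nonneg_right _ h.le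
                  exact pow_le_pow_of_le_one h.le hx1' (by omega)
              _ = x * x := by rw [pow_one]
        _ = 2 ^ b * (x * b₀ x ^ (a+b)) * x := by ring
        _ ≤ 2 ^ b * (2 + 2 * Real.log 2 + 2 * (a+b)) ^ (a+b) * x := by
            apply mul_le_mul_of_nonneg_right _ h.le
            apply mul_le_mul_of_nonneg_left _ (by positivity)
            exact_mod_cast x_mul_b0_pow_le (a+b) h hx1'
  · have : Continuous (fun x : ℝ => (2:ℝ) ^ b * (2 + 2 * Real.log 2 + 2 * (a+b)) ^ (a+b) * x) :=
      continuous_const.mul continuous_id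
    have h2 := this.tendsto 0
    simp only [mul_zero] at h2
    exact h2.mono_left nhdsWithin_le_nhds

lemma Gb_top (n a b : ℕ) (h : 1 ≤ a + b) : Tendsto (Gb n a b) atTop (nhds 0) := by
  set D : ℝ := max (Kf 0 1) (Kf 1 1) with hD
  have hD0 : 0 ≤ D := le_trans (Kf_nonneg 0 1) (le_max_left _ _)
  apply squeeze_zero_norm'
    (a := fun x => D ^ (a+b) * Real.exp 1 * (x ^ (2*n+2+b) * Real.exp (-x)))
  · filter_upwards [eventually_ge_atTop (1:ℝ)] with x hx
    have hx0 : (0:ℝ) < x := lt_of_lt_of_le zero_lt_one hx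
    rw [Real.norm_eq_abs, Gb, abs_integrand hx0 (2*n+2) a b]
    calc x ^ (2*n+2) * (Kf 0 x) ^ a * (x * Kf 1 x) ^ b
        ≤ x ^ (2*n+2) * (x ^ b * (D ^ (a+b) * Real.exp (1 - x))) := by
          rw [mul_assoc]
          exact mul_le_mul_of_nonneg_left (tail_bound a b h hx) (pow_nonneg hx0.le _)
      _ = D ^ (a+b) * Real.exp 1 * (x ^ (2*n+2+b) * Real.exp (-x)) := by
          rw [Real.exp_sub, pow_add, div_eq_mul_inv, ← Real.exp_neg]
          ring
  · rw [show (0:ℝ) = D ^ (a+b) * Real.exp 1 * 0 by ring]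
    exact (tendsto_pow_mul_exp_neg_atTop_nhds_zero (2*n+2+b)).const_mul _

theorem vacuum_recurrence (n a b : ℕ) (hab : 0 < a + b) :
    2 * ((n : ℝ) + 1) * V n a b + (a : ℝ) * V n (a - 1) (b + 1)
      + (b : ℝ) * V (n + 1) (a + 1) (b - 1) = 0 := by
  have hab1 : 1 ≤ a + b := hab
  have i1 := integrand_integrableOn (2*n+1) a b (by omega) hab1
  have i2 := integrand_integrableOn (2*n+1) (a-1) (b+1) (by omega) (by omega)
  have i3 := integrand_integrableOn (2*(n+1)+1) (a+1) (b-1) (by omega) (by omega)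
  have i12 : IntegrableOn (fun x : ℝ =>
      2*((n:ℝ)+1) * (x ^ (2*n+1) * (K₀ x)^a * (x * deriv K₀ x)^b)
        + (a:ℝ) * (x ^ (2*n+1) * (K₀ x)^(a-1) * (x * deriv K₀ x)^(b+1))) (Set.Ioi 0) :=
    (i1.const_mul _).add (i2.const_mul _)
  have i123 : IntegrableOn (fun x : ℝ =>
      2*((n:ℝ)+1) * (x ^ (2*n+1) * (K₀ x)^a * (x * deriv K₀ x)^b)
        + (a:ℝ) * (x ^ (2*n+1) * (K₀ x)^(a-1) * (x * deriv K₀ x)^(b+1))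
        + (b:ℝ) * (x ^ (2*(n+1)+1) * (K₀ x)^(a+1) * (x * deriv K₀ x)^(b-1))) (Set.Ioi 0) :=
    i12.add (i3.const_mul _)
  have key := integral_Ioi_of_hasDerivAt_of_tendsto (Gb_cont0 n a b)
    (fun x hx => Gb_deriv n a b hx) i123 (Gb_top n a b hab1)
  rw [Gb_zero, sub_zero] at key
  rw [V, V, V, ← integral_const_mul, ← integral_const_mul, ← integral_const_mul,
    ← integral_add (i1.const_mul (2*((n:ℝ)+1))) (i2.const_mul (a:ℝ)),
    ← integral_add i12 (i3.const_mul (b:ℝ))]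
  exact key
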